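/- Let A + λB be an n×n pencil over ℂ. Define the projection P(A) (resp. P(B)) by keeping the strictly upper triangular entries and all diagonal entries except the k-th, and setting all other entries to zero, where k minimizes |A_{ii}|² + |B_{ii}|² over i. Then P(A) + λP(B) is an upper triangular singular pencil, and for every upper triangular singular pencil S + λT it holds that ‖A − S‖_F² + ‖B − T‖_F² ≥ Σ_{i>j}(|A_{ij}|² + |B_{ij}|²) + min_{1≤i≤n}(|A_{ii}|² + |B_{ii}|²), with equality attained by S = P(A), T = P(B). -/
import Mathlib


open Polynomial Matrix

noncomputable def pencilPoly {n : ℕ} (A B : Matrix (Fin n) (Fin n) ℂ) :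
    Matrix (Fin n) (Fin n) (Polynomial ℂ) :=
  Matrix.of fun i j => C (A i j) + X * C (B i j)

def UpperTri {n : ℕ} (M : Matrix (Fin n) (Fin n) ℂ) : Prop :=
  ∀ i j : Fin n, j < i → M i j = 0

/-- Squared Frobenius norm of the pencil `A + λ B`. -/
noncomputable def pencilNormSq {n : ℕ} (A B : Matrix (Fin n) (Fin n) ℂ) : ℝ :=
  (∑ i, ∑ j, ‖A i j‖ ^ 2) + ∑ i, ∑ j, ‖B i j‖ ^ 2

/-- The projection keeping the strictly upper triangular entries and all diagonal
entries except the `k`-th. -/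
def Ptri {n : ℕ} (k : Fin n) (A : Matrix (Fin n) (Fin n) ℂ) : Matrix (Fin n) (Fin n) ℂ :=
  Matrix.of fun i j => if i < j ∨ (i = j ∧ i ≠ k) then A i j else 0

lemma pencil_entry_zero {a b : ℂ} (h : C a + X * C b = 0) : a = 0 ∧ b = 0 := by
  constructor
  · have := congrArg (fun p => Polynomial.coeff p 0) h
    simpa using this
  · have := congrArg (fun p => Polynomial.coeff p 1) h
    simpa [Polynomial.coeff_X_mul] using this

lemma Ptri_upperTri {n : ℕ} (k : Fin n) (M : Matrix (Fin n) (Fin n) ℂ) :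
    UpperTri (Ptri k M) := by
  intro i j hji
  simp only [Ptri, Matrix.of_apply]
  rw [if_neg]
  rintro (h | ⟨h, -⟩)
  · exact absurd (h.trans hji) (lt_irrefl i)
  · exact hji.ne' h

lemma pencilPoly_blockTri {n : ℕ} {S T : Matrix (Fin n) (Fin n) ℂ}
    (hS : UpperTri S) (hT : UpperTri T) : (pencilPoly S T).BlockTriangular id := by
  intro i j h
  simp only [id_eq] at h
  simp [pencilPoly, hS i j h, hT i j h]

/-- `P(A) + λ P(B)` is a nearest upper triangular singular pencil to `A + λ B`. -/
theorem nearest_upper_triangular_singular_pencil {n : ℕ}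
    (A B : Matrix (Fin n) (Fin n) ℂ) (k : Fin n)
    (hk : ∀ i : Fin n, ‖A k k‖ ^ 2 + ‖B k k‖ ^ 2 ≤ ‖A i i‖ ^ 2 + ‖B i i‖ ^ 2) :
    UpperTri (Ptri k A) ∧ UpperTri (Ptri k B) ∧
    (pencilPoly (Ptri k A) (Ptri k B)).det = 0 ∧
    (∀ S T : Matrix (Fin n) (Fin n) ℂ, UpperTri S → UpperTri T →
      (pencilPoly S T).det = 0 →
      (∑ i, ∑ j, if j < i then ‖A i j‖ ^ 2 + ‖B i j‖ ^ 2 else 0) +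
        Finset.univ.inf' ⟨k, Finset.mem_univ k⟩ (fun i => ‖A i i‖ ^ 2 + ‖B i i‖ ^ 2)
        ≤ pencilNormSq (A - S) (B - T)) ∧
    pencilNormSq (A - Ptri k A) (B - Ptri k B) =
      (∑ i, ∑ j, if j < i then ‖A i j‖ ^ 2 + ‖B i j‖ ^ 2 else 0) +
        Finset.univ.inf' ⟨k, Finset.mem_univ k⟩ (fun i => ‖A i i‖ ^ 2 + ‖B i i‖ ^ 2) := by
  have hinf : Finset.univ.inf' ⟨k, Finset.mem_univ k⟩
      (fun i => ‖A i i‖ ^ 2 + ‖B i i‖ ^ 2) = ‖A k k‖ ^ 2 + ‖B k k‖ ^ 2 := by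
    apply le_antisymm
    · exact Finset.inf'_le _ (Finset.mem_univ k)
    · exact Finset.le_inf' _ _ fun i _ => hk i
  refine ⟨Ptri_upperTri k A, Ptri_upperTri k B, ?_, ?_, ?_⟩
  · rw [Matrix.det_of_upperTriangular (pencilPoly_blockTri (Ptri_upperTri k A) (Ptri_upperTri k B))]
    apply Finset.prod_eq_zero (Finset.mem_univ k)
    simp [pencilPoly, Ptri]
  · intro S T hS hT hdet
    rw [Matrix.det_of_upperTriangular (pencilPoly_blockTri hS hT)] at hdet
    obtain ⟨i0, -, h0⟩ := Finset.prod_eq_zero_iff.mp hdet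
    simp only [pencilPoly, Matrix.of_apply] at h0
    obtain ⟨hS0, hT0⟩ := pencil_entry_zero h0
    have hnorm : pencilNormSq (A - S) (B - T) =
        ∑ i, ∑ j, (‖(A - S) i j‖ ^ 2 + ‖(B - T) i j‖ ^ 2) := by
      simp [pencilNormSq, Finset.sum_add_distrib]
    rw [hinf, hnorm]
    have key : ∀ i j : Fin n,
        (if j < i then ‖A i j‖ ^ 2 + ‖B i j‖ ^ 2 else 0) +
          (if i = i0 ∧ j = i0 then ‖A k k‖ ^ 2 + ‖B k k‖ ^ 2 else 0)
        ≤ ‖(A - S) i j‖ ^ 2 + ‖(B - T) i j‖ ^ 2 := by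
      intro i j
      by_cases hji : j < i
      · rw [if_pos hji, if_neg (by rintro ⟨rfl, rfl⟩; exact lt_irrefl _ hji), add_zero,
          Matrix.sub_apply, Matrix.sub_apply, hS i j hji, hT i j hji, sub_zero, sub_zero]
      · rw [if_neg hji, zero_add]
        by_cases hd : i = i0 ∧ j = i0
        · obtain ⟨rfl, rfl⟩ := hd
          rw [if_pos ⟨rfl, rfl⟩, Matrix.sub_apply, Matrix.sub_apply, hS0, hT0,
            sub_zero, sub_zero]
          exact hk _
        · rw [if_neg hd]
          positivity
    calc (∑ i, ∑ j, if j < i then ‖A i j‖ ^ 2 + ‖B i j‖ ^ 2 else 0) +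
          (‖A k k‖ ^ 2 + ‖B k k‖ ^ 2)
        = ∑ i, ∑ j, ((if j < i then ‖A i j‖ ^ 2 + ‖B i j‖ ^ 2 else 0) +
            (if i = i0 ∧ j = i0 then ‖A k k‖ ^ 2 + ‖B k k‖ ^ 2 else 0)) := by
          simp [Finset.sum_add_distrib, ite_and, Finset.sum_ite_eq']
      _ ≤ ∑ i, ∑ j, (‖(A - S) i j‖ ^ 2 + ‖(B - T) i j‖ ^ 2) :=
          Finset.sum_le_sum fun i _ => Finset.sum_le_sum fun j _ => key i j
  · rw [hinf]
    have entry : ∀ (M : Matrix (Fin n) (Fin n) ℂ) (i j : Fin n),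
        ‖(M - Ptri k M) i j‖ ^ 2 =
          if j < i ∨ (i = k ∧ j = k) then ‖M i j‖ ^ 2 else 0 := by
      intro M i j
      simp only [Matrix.sub_apply, Ptri, Matrix.of_apply]
      rcases lt_trichotomy i j with h | h | h
      · rw [if_pos (Or.inl h), sub_self, if_neg]
        · simp
        · rintro (h' | ⟨rfl, rfl⟩)
          · exact absurd (h.trans h') (lt_irrefl i)
          · exact lt_irrefl _ h
      · subst h
        by_cases hik : i = k
        · subst hik
          rw [if_neg, sub_zero, if_pos (Or.inr ⟨rfl, rfl⟩)]
          rintro (h' | ⟨-, h'⟩)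
          · exact lt_irrefl _ h'
          · exact h' rfl
        · rw [if_pos (Or.inr ⟨rfl, hik⟩), sub_self, if_neg]
          · simp
          · rintro (h' | ⟨h', -⟩)
            · exact lt_irrefl _ h'
            · exact hik h'
      · rw [if_neg, sub_zero, if_pos (Or.inl h)]
        rintro (h' | ⟨rfl, -⟩)
        · exact absurd (h.trans h') (lt_irrefl _)
        · exact lt_irrefl _ h
    have hnorm : pencilNormSq (A - Ptri k A) (B - Ptri k B) =
        ∑ i, ∑ j, (‖(A - Ptri k A) i j‖ ^ 2 + ‖(B - Ptri k B) i j‖ ^ 2) := by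
      simp [pencilNormSq, Finset.sum_add_distrib]
    rw [hnorm]
    have split : ∀ i j : Fin n,
        ‖(A - Ptri k A) i j‖ ^ 2 + ‖(B - Ptri k B) i j‖ ^ 2 =
          (if j < i then ‖A i j‖ ^ 2 + ‖B i j‖ ^ 2 else 0) +
          (if i = k ∧ j = k then ‖A k k‖ ^ 2 + ‖B k k‖ ^ 2 else 0) := by
      intro i j
      rw [entry A i j, entry B i j]
      by_cases hji : j < i
      · rw [if_pos (Or.inl hji), if_pos (Or.inl hji), if_pos hji,
          if_neg (by rintro ⟨rfl, rfl⟩; exact lt_irrefl _ hji), add_zero]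
      · by_cases hd : i = k ∧ j = k
        · obtain ⟨rfl, rfl⟩ := hd
          rw [if_pos (Or.inr ⟨rfl, rfl⟩), if_pos (Or.inr ⟨rfl, rfl⟩), if_neg hji,
            if_pos ⟨rfl, rfl⟩, zero_add]
        · rw [if_neg (by rintro (h | h); exacts [hji h, hd h]),
            if_neg (by rintro (h | h); exacts [hji h, hd h]), if_neg hji, if_neg hd]
    simp only [split]
    simp [Finset.sum_add_distrib, ite_and, Finset.sum_ite_eq']
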